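/- Let m ≥ 1 and i ≥ 1 be integers. Let (Ω, F, ℙ) be a probability space with a filtration (F_t)_{t≥i} and let (d_t)_{t≥i} be an adapted, nonnegative process with d_t ≤ 2mt almost surely for every t ≥ i, and such that for every t ≥ i, E[exp(d_{t+1} - d_t) | F_t] ≤ (1 + (e - 1)·c_t)^m almost surely, where e is Euler's number. Then limsup_{t→∞} d_t / ln t < ∞ almost surely. -/

import Mathlib

open Filter MeasureTheory

/-- `c_l = (2ml+1)/(l(2ml+1-2m))`. -/
noncomputable def cPAAPA (m l : ℕ) : ℝ :=
  (2 * (m : ℝ) * l + 1) / ((l : ℝ) * (2 * (m : ℝ) * l + 1 - 2 * m))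

lemma harmonic_le_log (n : ℕ) :
    ∑ s ∈ Finset.Ico 1 (n + 1), (1 : ℝ) / s ≤ 1 + Real.log (n : ℝ) := by
  induction n with
  | zero => simp
  | succ n ih =>
    rcases Nat.eq_zero_or_pos n with rfl | hn
    · simp
    rw [Finset.sum_Ico_succ_top (by omega)]
    have hlog : (1 : ℝ) / (n + 1) ≤ Real.log ((n : ℝ) + 1) - Real.log (n : ℝ) := by
      have hn' : (0 : ℝ) < n := by exact_mod_cast hn
      rw [← Real.log_div (by positivity) (by positivity)]
      have h1 := Real.one_sub_inv_le_log_of_pos (x := ((n : ℝ) + 1) / n) (by positivity)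
      have h2 : 1 - (((n : ℝ) + 1) / n)⁻¹ = 1 / (n + 1) := by
        rw [inv_div]; field_simp; ring
      linarith [h2 ▸ h1]
    push_cast
    push_cast at ih
    linarith

lemma denom_pos (m l : ℕ) (hm : 1 ≤ m) (hl : 1 ≤ l) :
    (0:ℝ) < (l : ℝ) * (2 * (m : ℝ) * l + 1 - 2 * m) := by
  have hm' : (1 : ℝ) ≤ m := by exact_mod_cast hm
  have hl' : (1 : ℝ) ≤ l := by exact_mod_cast hl
  have h : (0:ℝ) ≤ 2 * (m:ℝ) * (l - 1) := by nlinarith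
  nlinarith

lemma cP_nonneg (m l : ℕ) (hm : 1 ≤ m) (hl : 1 ≤ l) : 0 ≤ cPAAPA m l := by
  have hm' : (1 : ℝ) ≤ m := by exact_mod_cast hm
  have hl' : (1 : ℝ) ≤ l := by exact_mod_cast hl
  exact div_nonneg (by nlinarith) (denom_pos m l hm hl).le

lemma cP_le (m l : ℕ) (hm : 1 ≤ m) (hl : 1 ≤ l) :
    cPAAPA m l ≤ (2 * (m : ℝ) + 1) / l := by
  have hm' : (1 : ℝ) ≤ m := by exact_mod_cast hm
  have hl' : (1 : ℝ) ≤ l := by exact_mod_cast hl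
  unfold cPAAPA
  rw [div_le_div_iff₀ (denom_pos m l hm hl) (by linarith)]
  nlinarith [mul_nonneg (mul_nonneg (by positivity : (0:ℝ) ≤ 4*(m:ℝ)^2)
    (by linarith : (0:ℝ) ≤ (l:ℝ))) (by linarith : (0:ℝ) ≤ (l:ℝ)-1)]

/-- Theorem 3.10 of the paper: in the pure anti-preferential attachment model
`limsup_{t→∞} d(v_i,t)/ln t < ∞` almost surely, i.e. the sequence `d_t/ln t` is
almost surely eventually bounded above. -/
theorem pa_apa_pure_anti_degree_log_growth
    {Ω : Type*} {m0 : MeasurableSpace Ω} (μ : Measure Ω) [IsProbabilityMeasure μ]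
    (ℱ : Filtration ℕ m0) (m i : ℕ) (hm : 1 ≤ m) (hi : 1 ≤ i)
    (d : ℕ → Ω → ℝ) (hadapted : Adapted ℱ d)
    (hnonneg : ∀ t, i ≤ t → 0 ≤ᵐ[μ] d t)
    (hbound : ∀ t, i ≤ t → ∀ᵐ ω ∂μ, d t ω ≤ 2 * (m : ℝ) * t)
    (hmgf : ∀ t, i ≤ t →
      μ[fun ω => Real.exp (d (t + 1) ω - d t ω) | ℱ t] ≤ᵐ[μ]
        fun _ => (1 + (Real.exp 1 - 1) * cPAAPA m t) ^ m) :
    ∀ᵐ ω ∂μ,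
      IsBoundedUnder (· ≤ ·) atTop (fun t : ℕ => d t ω / Real.log t) := by
  set e1 : ℝ := Real.exp 1 - 1 with he1def
  have he1 : (0:ℝ) ≤ e1 := by
    have := Real.add_one_le_exp (1:ℝ); simp only [he1def]; linarith
  set K : ℝ := (m:ℝ) * e1 * (2*m+1) with hKdef
  have hK : 0 ≤ K := by positivity
  set A : ℝ := 2*(m:ℝ)*i + K with hAdef
  -- integrability of exp (d t)
  have hint : ∀ t, i ≤ t → Integrable (fun ω => Real.exp (d t ω)) μ := by
    intro t ht
    refine ⟨(Real.continuous_exp.comp_stronglyMeasurable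
      ((hadapted t).stronglyMeasurable.mono (ℱ.le t))).aestronglyMeasurable,
      HasFiniteIntegral.of_bounded (C := Real.exp (2*(m:ℝ)*t)) ?_⟩
    filter_upwards [hbound t ht] with ω h
    rw [Real.norm_eq_abs, abs_of_pos (Real.exp_pos _)]
    exact Real.exp_le_exp.mpr h
  have hintg : ∀ t, i ≤ t →
      Integrable (fun ω => Real.exp (d (t+1) ω - d t ω)) μ := by
    intro t ht
    refine ⟨(Real.continuous_exp.comp_stronglyMeasurable
      (((hadapted (t+1)).stronglyMeasurable.mono (ℱ.le (t+1))).sub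
        ((hadapted t).stronglyMeasurable.mono (ℱ.le t)))).aestronglyMeasurable,
      HasFiniteIntegral.of_bounded (C := Real.exp (2*(m:ℝ)*(t+1))) ?_⟩
    filter_upwards [hbound (t+1) (by omega), hnonneg t ht] with ω h1 h2
    simp only [Pi.zero_apply] at h2
    rw [Real.norm_eq_abs, abs_of_pos (Real.exp_pos _)]
    refine Real.exp_le_exp.mpr ?_
    push_cast
    push_cast at h1
    linarith
  -- one-step inequality
  have hstep : ∀ t, i ≤ t →
      ∫ ω, Real.exp (d (t+1) ω) ∂μ ≤
        (1 + e1 * cPAAPA m t)^m * ∫ ω, Real.exp (d t ω) ∂μ := by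
    intro t ht
    have hfg_eq : (fun ω => Real.exp (d t ω)) * (fun ω => Real.exp (d (t+1) ω - d t ω))
        = fun ω => Real.exp (d (t+1) ω) := by
      funext ω
      simp only [Pi.mul_apply, ← Real.exp_add]
      ring_nf
    have hfmeas : StronglyMeasurable[ℱ t] (fun ω => Real.exp (d t ω)) :=
      Real.continuous_exp.comp_stronglyMeasurable (hadapted t).stronglyMeasurable
    have hintfg : Integrable ((fun ω => Real.exp (d t ω)) *
        (fun ω => Real.exp (d (t+1) ω - d t ω))) μ := by
      rw [hfg_eq]; exact hint (t+1) (by omega)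
    have hpull := condExp_mul_of_stronglyMeasurable_left (μ := μ) hfmeas hintfg (hintg t ht)
    calc ∫ ω, Real.exp (d (t+1) ω) ∂μ
        = ∫ ω, ((fun ω => Real.exp (d t ω)) *
            (fun ω => Real.exp (d (t+1) ω - d t ω))) ω ∂μ := by rw [hfg_eq]
      _ = ∫ ω, (μ[(fun ω => Real.exp (d t ω)) *
            (fun ω => Real.exp (d (t+1) ω - d t ω)) | ℱ t]) ω ∂μ :=
          (integral_condExp (ℱ.le t)).symm
      _ ≤ ∫ ω, (1 + e1 * cPAAPA m t)^m * Real.exp (d t ω) ∂μ := by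
          refine integral_mono_ae integrable_condExp ((hint t ht).const_mul _) ?_
          filter_upwards [hpull, hmgf t ht] with ω h1 h2
          rw [h1]
          simp only [Pi.mul_apply]
          calc Real.exp (d t ω) * (μ[fun ω => Real.exp (d (t+1) ω - d t ω) | ℱ t]) ω
              ≤ Real.exp (d t ω) * (1 + e1 * cPAAPA m t)^m :=
                mul_le_mul_of_nonneg_left h2 (Real.exp_pos _).le
            _ = (1 + e1 * cPAAPA m t)^m * Real.exp (d t ω) := mul_comm _ _
      _ = (1 + e1 * cPAAPA m t)^m * ∫ ω, Real.exp (d t ω) ∂μ := integral_const_mul _ _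
  -- iterate
  have hiter : ∀ t, i ≤ t → ∫ ω, Real.exp (d t ω) ∂μ ≤
      Real.exp (2*(m:ℝ)*i) * ∏ s ∈ Finset.Ico i t, (1 + e1 * cPAAPA m s)^m := by
    intro t ht
    induction t, ht using Nat.le_induction with
    | base =>
      rw [Finset.Ico_self, Finset.prod_empty, mul_one]
      calc ∫ ω, Real.exp (d i ω) ∂μ ≤ ∫ _ω, Real.exp (2*(m:ℝ)*i) ∂μ := by
            refine integral_mono_ae (hint i le_rfl) (integrable_const _) ?_
            filter_upwards [hbound i le_rfl] with ω h using Real.exp_le_exp.mpr h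
        _ = Real.exp (2*(m:ℝ)*i) := by simp
    | succ t ht ih =>
      have hfac_nn : (0:ℝ) ≤ (1 + e1 * cPAAPA m t)^m := by
        have := cP_nonneg m t hm (le_trans hi ht)
        positivity
      calc ∫ ω, Real.exp (d (t+1) ω) ∂μ
          ≤ (1 + e1 * cPAAPA m t)^m * ∫ ω, Real.exp (d t ω) ∂μ := hstep t ht
        _ ≤ (1 + e1 * cPAAPA m t)^m *
            (Real.exp (2*(m:ℝ)*i) * ∏ s ∈ Finset.Ico i t, (1 + e1 * cPAAPA m s)^m) :=
            mul_le_mul_of_nonneg_left ih hfac_nn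
        _ = Real.exp (2*(m:ℝ)*i) * ∏ s ∈ Finset.Ico i (t+1), (1 + e1 * cPAAPA m s)^m := by
            rw [Finset.prod_Ico_succ_top ht]; ring
  -- bound on the product
  have hfac : ∀ s, i ≤ s → (1 + e1 * cPAAPA m s)^m ≤ Real.exp (K / s) := by
    intro s hs
    have hs1 : 1 ≤ s := le_trans hi hs
    have hs1' : (1:ℝ) ≤ s := by exact_mod_cast hs1
    have hc0 := cP_nonneg m s hm hs1
    have hcle := cP_le m s hm hs1
    calc (1 + e1 * cPAAPA m s)^m ≤ (Real.exp (e1 * cPAAPA m s))^m := by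
          refine pow_le_pow_left₀ (by positivity) ?_ m
          have := Real.add_one_le_exp (e1 * cPAAPA m s)
          linarith
      _ = Real.exp ((m:ℝ) * (e1 * cPAAPA m s)) := (Real.exp_nat_mul _ m).symm
      _ ≤ Real.exp (K / s) := by
          refine Real.exp_le_exp.mpr ?_
          have h1 : (m:ℝ) * (e1 * cPAAPA m s) = ((m:ℝ)*e1) * cPAAPA m s := by ring
          have h2 : K / s = ((m:ℝ)*e1) * ((2*(m:ℝ)+1)/s) := by
            rw [hKdef]; ring
          rw [h1, h2]
          exact mul_le_mul_of_nonneg_left hcle (by positivity)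
  have hprod : ∀ t, i ≤ t →
      ∏ s ∈ Finset.Ico i t, (1 + e1 * cPAAPA m s)^m ≤ Real.exp (K * (1 + Real.log t)) := by
    intro t ht
    have ht1 : 1 ≤ t := le_trans hi ht
    calc ∏ s ∈ Finset.Ico i t, (1 + e1 * cPAAPA m s)^m
        ≤ ∏ s ∈ Finset.Ico i t, Real.exp (K / s) := by
          refine Finset.prod_le_prod (fun s hs => ?_) (fun s hs => hfac s (Finset.mem_Ico.mp hs).1)
          have := cP_nonneg m s hm (le_trans hi (Finset.mem_Ico.mp hs).1)
          positivity
      _ = Real.exp (∑ s ∈ Finset.Ico i t, K / s) := (Real.exp_sum _ _).symm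
      _ ≤ Real.exp (K * (1 + Real.log t)) := by
          refine Real.exp_le_exp.mpr ?_
          have hsum1 : ∑ s ∈ Finset.Ico i t, K / s = K * ∑ s ∈ Finset.Ico i t, (1:ℝ)/s := by
            rw [Finset.mul_sum]
            exact Finset.sum_congr rfl fun s _ => by rw [mul_one_div]
          rw [hsum1]
          refine mul_le_mul_of_nonneg_left ?_ hK
          have hsub : Finset.Ico i t ⊆ Finset.Ico 1 t := by
            intro s hs
            rw [Finset.mem_Ico] at *
            omega
          have h1 : ∑ s ∈ Finset.Ico i t, (1:ℝ)/s ≤ ∑ s ∈ Finset.Ico 1 t, (1:ℝ)/s :=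
            Finset.sum_le_sum_of_subset_of_nonneg hsub (fun s _ _ => by positivity)
          have h2 : ∑ s ∈ Finset.Ico 1 t, (1:ℝ)/s ≤ 1 + Real.log ((t-1 : ℕ) : ℝ) := by
            have : t = (t - 1) + 1 := by omega
            rw [this]
            exact harmonic_le_log (t-1)
          have h3 : Real.log ((t-1:ℕ):ℝ) ≤ Real.log t := by
            rcases eq_or_lt_of_le ht1 with h | h
            · simp [← h]
            · refine Real.log_le_log (by exact_mod_cast Nat.sub_pos_of_lt h) ?_
              exact_mod_cast Nat.sub_le t 1
          linarith
  -- integral bound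
  have hibound : ∀ t, i ≤ t → ∫ ω, Real.exp (d t ω) ∂μ ≤ Real.exp (A + K * Real.log t) := by
    intro t ht
    calc ∫ ω, Real.exp (d t ω) ∂μ
        ≤ Real.exp (2*(m:ℝ)*i) * ∏ s ∈ Finset.Ico i t, (1 + e1 * cPAAPA m s)^m := hiter t ht
      _ ≤ Real.exp (2*(m:ℝ)*i) * Real.exp (K * (1 + Real.log t)) :=
          mul_le_mul_of_nonneg_left (hprod t ht) (Real.exp_pos _).le
      _ = Real.exp (A + K * Real.log t) := by
          rw [← Real.exp_add, hAdef]; ring_nf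
  -- Markov
  have hmark : ∀ t, i ≤ t → 2 ≤ t →
      μ {ω | (K+2) * Real.log t ≤ d t ω} ≤ ENNReal.ofReal (Real.exp A * (1/(t:ℝ)^2)) := by
    intro t ht ht2
    have ht2' : (2:ℝ) ≤ t := by exact_mod_cast ht2
    have ht0 : (0:ℝ) < t := by linarith
    set ε : ℝ := Real.exp ((K+2) * Real.log t) with hεdef
    have hε : 0 < ε := Real.exp_pos _
    have hset : {ω | (K+2) * Real.log t ≤ d t ω}
        = {ω | ε ≤ Real.exp (d t ω)} := by
      ext ω; simp [hεdef, Real.exp_le_exp]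
    have hM := mul_meas_ge_le_integral_of_nonneg
      (Eventually.of_forall fun ω => (Real.exp_pos (d t ω)).le) (hint t ht) ε
    have hM2 : (μ {ω | ε ≤ Real.exp (d t ω)}).toReal ≤ Real.exp (A + K * Real.log t) / ε := by
      rw [le_div_iff₀ hε, mul_comm]
      exact le_trans hM (hibound t ht)
    have hval : Real.exp (A + K * Real.log t) / ε = Real.exp A * (1/(t:ℝ)^2) := by
      rw [hεdef, ← Real.exp_sub]
      have : A + K * Real.log t - (K+2) * Real.log t = A + (-(2 * Real.log t)) := by ring
      rw [this, Real.exp_add, Real.exp_neg]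
      congr 1
      rw [two_mul, Real.exp_add, Real.exp_log ht0, one_div, sq]
    rw [hset]
    refine (ENNReal.le_ofReal_iff_toReal_le (measure_ne_top μ _) (by positivity)).mpr ?_
    rw [← hval]
    exact hM2
  -- Borel-Cantelli
  set T0 : ℕ := max i 2 with hT0def
  set S : ℕ → Set Ω := fun t => if T0 ≤ t then {ω | (K+2) * Real.log t ≤ d t ω} else ∅
    with hSdef
  have hsummable : Summable (fun t : ℕ => Real.exp A * (1/(t:ℝ)^2)) :=
    ((Real.summable_one_div_nat_pow).mpr one_lt_two).mul_left _
  have hsum : (∑' t, μ (S t)) ≠ ⊤ := by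
    have hb : ∀ t, μ (S t) ≤ ENNReal.ofReal (Real.exp A * (1/(t:ℝ)^2)) := by
      intro t
      by_cases h : T0 ≤ t
      · simp only [hSdef, if_pos h]
        exact hmark t (le_trans (le_max_left _ _) h) (le_trans (le_max_right _ _) h)
      · simp [hSdef, if_neg h]
    refine ne_top_of_le_ne_top ?_ (ENNReal.tsum_le_tsum hb)
    rw [← ENNReal.ofReal_tsum_of_nonneg (fun n => by positivity) hsummable]
    exact ENNReal.ofReal_ne_top
  filter_upwards [ae_eventually_notMem hsum] with ω hω
  refine isBoundedUnder_of_eventually_le (a := K+2) ?_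
  filter_upwards [hω, eventually_ge_atTop T0] with t h1 h2
  simp only [hSdef, if_pos h2, Set.mem_setOf_eq, not_le] at h1
  have ht2 : 2 ≤ t := le_trans (le_max_right _ _) h2
  have hlt : (1:ℝ) < t := by exact_mod_cast lt_of_lt_of_le one_lt_two ht2
  have hlog : 0 < Real.log t := Real.log_pos hlt
  exact (div_le_iff₀ hlog).mpr h1.le
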